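/- Let Γ be a connected graph with at least two vertices. Then the combinatorial horoball ℋ(Γ) is connected, and for any two vertices (v,m), (w,n), there is a geodesic between them which consists of at most two vertical segments and a single horizontal segment of length at most 3. -/

import Mathlib

/-- The combinatorial horoball on a graph `Γ`: vertices are `V × ℕ` (`(v, k)`
is `v` at depth `k`); vertical edges join `(v, k)` and `(v, k+1)`; horizontal
edges at depth `0` are the edges of `Γ`, and at depth `k > 0` join `(v, k)` and
`(w, k)` whenever `0 < d_Γ(v, w) ≤ 2 ^ k`. -/
def horoball {V : Type*} (Γ : SimpleGraph V) : SimpleGraph (V × ℕ) where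
  Adj p q :=
    (p.2 = q.2 ∧ ((p.2 = 0 ∧ Γ.Adj p.1 q.1) ∨
      (0 < p.2 ∧ p.1 ≠ q.1 ∧ Γ.dist p.1 q.1 ≤ 2 ^ p.2))) ∨
    (p.1 = q.1 ∧ (p.2 = q.2 + 1 ∨ q.2 = p.2 + 1))
  symm := by
    constructor
    rintro ⟨v, k⟩ ⟨w, l⟩ (⟨h, ⟨h0, ha⟩ | ⟨hk, hne, hd⟩⟩ | ⟨h, hl⟩)
    · subst h
      exact Or.inl ⟨rfl, Or.inl ⟨h0, ha.symm⟩⟩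
    · subst h
      exact Or.inl ⟨rfl, Or.inr ⟨hk, hne.symm, by rwa [SimpleGraph.dist_comm]⟩⟩
    · exact Or.inr ⟨h.symm, hl.symm⟩
  loopless := by
    constructor
    rintro ⟨v, k⟩ (⟨-, ⟨-, ha⟩ | ⟨-, hne, -⟩⟩ | ⟨-, hl | hl⟩)
    · exact Γ.loopless.irrefl v ha
    · exact hne rfl
    · omega
    · omega

namespace HoroballAux

open SimpleGraph Walk

/-- ceiling of `d / 2 ^ k`. -/
def cdiv (d k : ℕ) : ℕ := (d + 2 ^ k - 1) / 2 ^ k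

lemma cdiv_le {d t k : ℕ} (h : d ≤ t * 2 ^ k) : cdiv d k ≤ t := by
  have hb : 0 < 2 ^ k := Nat.two_pow_pos k
  unfold cdiv
  calc (d + 2 ^ k - 1) / 2 ^ k ≤ (2 ^ k * t + (2 ^ k - 1)) / 2 ^ k := by
        apply Nat.div_le_div_right; rw [Nat.mul_comm]; omega
    _ = t + (2 ^ k - 1) / 2 ^ k := Nat.mul_add_div hb t (2 ^ k - 1)
    _ = t := by rw [Nat.div_eq_of_lt (by omega : 2 ^ k - 1 < 2 ^ k)]; omega

lemma le_cdiv_mul (d k : ℕ) : d ≤ cdiv d k * 2 ^ k := by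
  have hb : 0 < 2 ^ k := Nat.two_pow_pos k
  rcases Nat.eq_zero_or_pos d with h | h
  · omega
  · have h1 : cdiv d k = (d - 1) / 2 ^ k + 1 := by
      unfold cdiv
      rw [show d + 2 ^ k - 1 = (d - 1) + 2 ^ k by omega, Nat.add_div_right _ hb]
    have h2 := Nat.div_add_mod (d - 1) (2 ^ k)
    have h3 := Nat.mod_lt (d - 1) hb
    rw [h1, Nat.add_mul, Nat.one_mul]
    set q := (d - 1) / 2 ^ k with hq
    have h4 : 2 ^ k * q + (d - 1) % 2 ^ k = d - 1 := h2
    rw [Nat.mul_comm] at h4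
    omega

lemma cdiv_zero (k : ℕ) : cdiv 0 k = 0 :=
  Nat.le_zero.mp (cdiv_le (by omega))

lemma cdiv_eq_one {d k : ℕ} (h1 : 0 < d) (h2 : d ≤ 2 ^ k) : cdiv d k = 1 := by
  have ha : cdiv d k ≤ 1 := cdiv_le (by omega)
  have hb := le_cdiv_mul d k
  rcases Nat.eq_zero_or_pos (cdiv d k) with h | h
  · rw [h] at hb; omega
  · omega

lemma cdiv_sub {d k : ℕ} (h : 2 ^ k ≤ d) : cdiv (d - 2 ^ k) k + 1 = cdiv d k := by
  have hb : 0 < 2 ^ k := Nat.two_pow_pos k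
  unfold cdiv
  rw [show d - 2 ^ k + 2 ^ k - 1 = d - 1 by omega,
    show d + 2 ^ k - 1 = (d - 1) + 2 ^ k by omega, Nat.add_div_right _ hb]

/-- the cost of the path through level `k`. -/
def cost (d m n k : ℕ) : ℕ := (k - m) + cdiv d k + (k - n)

lemma cost_succ_le {d m n k : ℕ} (h : 3 * 2 ^ k < d) (hm : m ≤ k) (hn : n ≤ k) :
    cost d m n (k + 1) ≤ cost d m n k := by
  set a := cdiv d k with ha
  have h1 : d ≤ a * 2 ^ k := le_cdiv_mul d k
  have h2 : 4 ≤ a := by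
    by_contra hc
    have : a * 2 ^ k ≤ 3 * 2 ^ k := Nat.mul_le_mul_right _ (by omega)
    omega
  have h3 : cdiv d (k + 1) ≤ (a + 1) / 2 := by
    apply cdiv_le
    have : a ≤ (a + 1) / 2 * 2 := by omega
    calc d ≤ a * 2 ^ k := h1
      _ ≤ ((a + 1) / 2 * 2) * 2 ^ k := Nat.mul_le_mul_right _ this
      _ = (a + 1) / 2 * 2 ^ (k + 1) := by ring
  unfold cost
  omega

lemma cost_le_succ {d m n k : ℕ} (h : d ≤ 3 * 2 ^ k) (hm : m ≤ k) (hn : n ≤ k) :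
    cost d m n k ≤ cost d m n (k + 1) := by
  have h1 : cdiv d k ≤ 3 := cdiv_le (by omega)
  have h2 : cdiv d k ≤ 2 * cdiv d (k + 1) := by
    apply cdiv_le
    calc d ≤ cdiv d (k + 1) * 2 ^ (k + 1) := le_cdiv_mul d (k + 1)
      _ = 2 * cdiv d (k + 1) * 2 ^ k := by ring
  unfold cost
  omega

end HoroballAux

namespace HoroballAux

open SimpleGraph Walk

variable {V : Type*} {Γ : SimpleGraph V}

/-- On a geodesic from `v` to `w` one can find a vertex at any prescribed distance. -/
lemma exists_mid (hconn : Γ.Connected) (v w : V) :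
    ∀ i, i ≤ Γ.dist v w → ∃ u, Γ.dist v u = i ∧ Γ.dist u w + i = Γ.dist v w := by
  intro i
  induction i with
  | zero => intro _; exact ⟨v, SimpleGraph.dist_self, by simp⟩
  | succ i ih =>
    intro h
    obtain ⟨u, h1, h2⟩ := ih (by omega)
    have hd : Γ.dist u w ≠ 0 := by omega
    obtain ⟨p, hp⟩ := SimpleGraph.exists_walk_of_dist_ne_zero hd
    cases p with
    | nil => simp at hp; omega
    | @cons _ u' _ hadj q =>
      have hq : Γ.dist u' w ≤ q.length := SimpleGraph.dist_le q
      have hlen : q.length + 1 = Γ.dist u w := by simpa using hp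
      have huu' : Γ.dist u u' = 1 := SimpleGraph.dist_eq_one_iff_adj.mpr hadj
      have t1 : Γ.dist u w ≤ Γ.dist u u' + Γ.dist u' w := hconn.dist_triangle
      have t2 : Γ.dist v u' ≤ Γ.dist v u + Γ.dist u u' := hconn.dist_triangle
      have t3 : Γ.dist v w ≤ Γ.dist v u' + Γ.dist u' w := hconn.dist_triangle
      exact ⟨u', by omega, by omega⟩

/-- Horizontal walk at depth `k` of length `⌈d / 2^k⌉`. -/
lemma horiz_walk (hconn : Γ.Connected) (k : ℕ) :
    ∀ d v w, Γ.dist v w = d →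
      ∃ p : (horoball Γ).Walk (v, k) (w, k), p.length = cdiv d k := by
  intro d
  induction d using Nat.strong_induction_on with
  | _ d ih =>
    intro v w hd
    rcases Nat.eq_zero_or_pos d with h0 | h0
    · subst h0
      have : v = w := hconn.dist_eq_zero_iff.mp hd
      subst this
      exact ⟨Walk.nil, by simp [cdiv_zero]⟩
    · have hb : 0 < 2 ^ k := Nat.two_pow_pos k
      set s := min (2 ^ k) d with hs
      have hs1 : 0 < s := by omega
      have hs2 : s ≤ 2 ^ k := min_le_left _ _
      obtain ⟨u, hu1, hu2⟩ := exists_mid hconn v w s (by omega)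
      have hadj : (horoball Γ).Adj (v, k) (u, k) := by
        rcases Nat.eq_zero_or_pos k with hk | hk
        · subst hk
          have : Γ.dist v u = 1 := by
            have hs0 : s = 1 := by simp only [pow_zero] at hs; omega
            omega
          exact Or.inl ⟨rfl, Or.inl ⟨rfl, SimpleGraph.dist_eq_one_iff_adj.mp this⟩⟩
        · have hne : v ≠ u := by
            intro he; rw [he, SimpleGraph.dist_self] at hu1; omega
          exact Or.inl ⟨rfl, Or.inr ⟨hk, hne, by show Γ.dist v u ≤ 2 ^ k; omega⟩⟩
      obtain ⟨q, hq⟩ := ih (d - s) (by omega) u w (by omega)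
      refine ⟨Walk.cons hadj q, ?_⟩
      rw [Walk.length_cons, hq]
      rcases le_or_gt d (2 ^ k) with hc | hc
      · have : s = d := by omega
        rw [this, Nat.sub_self, cdiv_zero, cdiv_eq_one h0 hc]
      · have : s = 2 ^ k := by omega
        rw [this, cdiv_sub (by omega)]

/-- Vertical walk from depth `m` up to depth `k`. -/
lemma vert_walk (v : V) {m k : ℕ} (h : m ≤ k) :
    ∃ p : (horoball Γ).Walk (v, m) (v, k), p.length = k - m := by
  induction k, h using Nat.le_induction with
  | base => exact ⟨Walk.nil, by simp⟩
  | succ k hk ih =>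
    obtain ⟨p, hp⟩ := ih
    have hadj : (horoball Γ).Adj (v, k) (v, k + 1) := Or.inr ⟨rfl, Or.inr rfl⟩
    exact ⟨p.concat hadj, by rw [Walk.length_concat, hp]; omega⟩

lemma upper_walk (hconn : Γ.Connected) (v w : V) {m n k : ℕ} (hm : m ≤ k) (hn : n ≤ k) :
    ∃ p : (horoball Γ).Walk (v, m) (w, n),
      p.length = (k - m) + cdiv (Γ.dist v w) k + (k - n) := by
  obtain ⟨p1, h1⟩ := vert_walk (Γ := Γ) v hm
  obtain ⟨p2, h2⟩ := horiz_walk hconn k (Γ.dist v w) v w rfl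
  obtain ⟨p3, h3⟩ := vert_walk (Γ := Γ) w hn
  refine ⟨(p1.append p2).append p3.reverse, ?_⟩
  rw [Walk.length_append, Walk.length_append, Walk.length_reverse, h1, h2, h3]

end HoroballAux

namespace HoroballAux

open SimpleGraph Walk

variable {V : Type*} {Γ : SimpleGraph V}

/-- number of vertical darts of a walk in the horoball. -/
def vcnt {x y : V × ℕ} (p : (horoball Γ).Walk x y) : ℕ :=
  (p.darts.map fun e => if e.toProd.1.2 = e.toProd.2.2 then 0 else 1).sum

/-- number of horizontal darts of a walk in the horoball. -/
def hcnt {x y : V × ℕ} (p : (horoball Γ).Walk x y) : ℕ :=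
  (p.darts.map fun e => if e.toProd.1.2 = e.toProd.2.2 then 1 else 0).sum

/-- weighted sum of horizontal darts. -/
def wsum {x y : V × ℕ} (p : (horoball Γ).Walk x y) : ℕ :=
  (p.darts.map fun e => if e.toProd.1.2 = e.toProd.2.2 then 2 ^ e.toProd.1.2 else 0).sum

lemma dist_le_wsum (hconn : Γ.Connected) {x y : V × ℕ} (p : (horoball Γ).Walk x y) :
    Γ.dist x.1 y.1 ≤ wsum p := by
  induction p with
  | nil => simp [wsum, SimpleGraph.dist_self]
  | @cons x b y h q ih =>
    have hstep : Γ.dist x.1 b.1 ≤ if x.2 = b.2 then 2 ^ x.2 else 0 := by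
      rcases h with ⟨heq, ⟨h0, ha⟩ | ⟨hk, hne, hdd⟩⟩ | ⟨heq, hv⟩
      · rw [if_pos heq, h0]
        have := SimpleGraph.dist_eq_one_iff_adj.mpr ha
        omega
      · rw [if_pos heq]; exact hdd
      · rw [heq, SimpleGraph.dist_self]; omega
    have htri : Γ.dist x.1 y.1 ≤ Γ.dist x.1 b.1 + Γ.dist b.1 y.1 := hconn.dist_triangle
    have hw : wsum (Walk.cons h q) =
        (if x.2 = b.2 then 2 ^ x.2 else 0) + wsum q := by
      simp [wsum, Walk.darts_cons]
    omega

lemma depth_le_vcnt {x y : V × ℕ} (p : (horoball Γ).Walk x y) :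
    y.2 ≤ x.2 + vcnt p ∧ x.2 ≤ y.2 + vcnt p := by
  induction p with
  | nil => simp [vcnt]
  | @cons x b y h q ih =>
    have hstep : (x.2 = b.2 ∧ (if x.2 = b.2 then (0:ℕ) else 1) = 0) ∨
        ((x.2 = b.2 + 1 ∨ b.2 = x.2 + 1) ∧ (if x.2 = b.2 then (0:ℕ) else 1) = 1) := by
      rcases h with ⟨heq, -⟩ | ⟨-, hv⟩
      · exact Or.inl ⟨heq, if_pos heq⟩
      · refine Or.inr ⟨hv, if_neg ?_⟩; omega
    have hv : vcnt (Walk.cons h q) = (if x.2 = b.2 then 0 else 1) + vcnt q := by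
      simp [vcnt, Walk.darts_cons]
    rcases hstep with ⟨he, hz⟩ | ⟨hv1, hz⟩ <;> omega

lemma hcnt_add_vcnt {x y : V × ℕ} (p : (horoball Γ).Walk x y) :
    hcnt p + vcnt p = p.length := by
  induction p with
  | nil => simp [hcnt, vcnt]
  | @cons x b y h q ih =>
    have h1 : hcnt (Walk.cons h q) = (if x.2 = b.2 then 1 else 0) + hcnt q := by
      simp [hcnt, Walk.darts_cons]
    have h2 : vcnt (Walk.cons h q) = (if x.2 = b.2 then 0 else 1) + vcnt q := by
      simp [vcnt, Walk.darts_cons]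
    rw [Walk.length_cons]
    split_ifs at h1 h2 <;> omega

lemma wsum_le_hcnt_mul {x y : V × ℕ} (p : (horoball Γ).Walk x y) (K : ℕ)
    (hK : ∀ z ∈ p.support, z.2 ≤ K) : wsum p ≤ hcnt p * 2 ^ K := by
  induction p with
  | nil => simp [wsum, hcnt]
  | @cons x b y h q ih =>
    have hx : x.2 ≤ K := hK x (by simp)
    have hq : ∀ z ∈ q.support, z.2 ≤ K := fun z hz => hK z (by simp [hz])
    have h1 : wsum (Walk.cons h q) = (if x.2 = b.2 then 2 ^ x.2 else 0) + wsum q := by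
      simp [wsum, Walk.darts_cons]
    have h2 : hcnt (Walk.cons h q) = (if x.2 = b.2 then 1 else 0) + hcnt q := by
      simp [hcnt, Walk.darts_cons]
    have hstep : (if x.2 = b.2 then 2 ^ x.2 else 0) ≤
        (if x.2 = b.2 then 1 else 0) * 2 ^ K := by
      split_ifs
      · simpa using Nat.pow_le_pow_right (by omega) hx
      · simp
    have := ih hq
    rw [h1, h2, Nat.add_mul]
    omega

lemma vcnt_append {x y z : V × ℕ} (p : (horoball Γ).Walk x y) (q : (horoball Γ).Walk y z) :
    vcnt (p.append q) = vcnt p + vcnt q := by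
  simp [vcnt, Walk.darts_append]

/-- lower bound for the length of any walk in the horoball. -/
lemma lower_bound (hconn : Γ.Connected) {x y : V × ℕ} (p : (horoball Γ).Walk x y) :
    ∃ K, x.2 ≤ K ∧ y.2 ≤ K ∧
      (K - x.2) + cdiv (Γ.dist x.1 y.1) K + (K - y.2) ≤ p.length := by
  classical
  obtain ⟨u, hu, hmax⟩ := Finset.exists_max_image p.support.toFinset (fun z => z.2)
    ⟨x, by simp [Walk.start_mem_support]⟩
  have hmax' : ∀ z ∈ p.support, z.2 ≤ u.2 := fun z hz =>
    hmax z (List.mem_toFinset.mpr hz)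
  have hu' : u ∈ p.support := List.mem_toFinset.mp hu
  refine ⟨u.2, hmax' x p.start_mem_support, hmax' y p.end_mem_support, ?_⟩
  have hsplit := p.take_spec hu'
  have h1 := (depth_le_vcnt (p.takeUntil u hu')).1
  have h2 := (depth_le_vcnt (p.dropUntil u hu')).2
  have h3 : vcnt (p.takeUntil u hu') + vcnt (p.dropUntil u hu') = vcnt p := by
    rw [← vcnt_append, hsplit]
  have h4 : Γ.dist x.1 y.1 ≤ hcnt p * 2 ^ u.2 :=
    le_trans (dist_le_wsum hconn p) (wsum_le_hcnt_mul p u.2 hmax')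
  have h5 : cdiv (Γ.dist x.1 y.1) u.2 ≤ hcnt p := cdiv_le h4
  have h6 := hcnt_add_vcnt p
  omega

end HoroballAux

namespace HoroballAux

open SimpleGraph Walk

lemma exists_opt (d m n : ℕ) : ∃ k, max m n ≤ k ∧ d ≤ 3 * 2 ^ k ∧
    ∀ K, max m n ≤ K → cost d m n k ≤ cost d m n K := by
  set M := max m n with hM
  have hex : ∃ j, d ≤ 3 * 2 ^ (M + j) := by
    refine ⟨d, ?_⟩
    have h1 := Nat.lt_two_pow_self (n := d)
    have h2 : 2 ^ d ≤ 2 ^ (M + d) := Nat.pow_le_pow_right (by omega) (by omega)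
    omega
  set j0 := Nat.find hex with hj0
  have hspec : d ≤ 3 * 2 ^ (M + j0) := Nat.find_spec hex
  refine ⟨M + j0, by omega, hspec, ?_⟩
  have up : ∀ K, M + j0 ≤ K → cost d m n (M + j0) ≤ cost d m n K := by
    intro K hK
    induction K, hK using Nat.le_induction with
    | base => exact le_refl _
    | succ K hK ih =>
      refine le_trans ih (cost_le_succ ?_ (by omega) (by omega))
      have : 2 ^ (M + j0) ≤ 2 ^ K := Nat.pow_le_pow_right (by omega) hK
      omega
  have down : ∀ i K, M ≤ K → K + i = M + j0 → cost d m n (M + j0) ≤ cost d m n K := by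
    intro i
    induction i with
    | zero =>
      intro K hK h
      have : K = M + j0 := by omega
      exact this ▸ le_refl _
    | succ i ih =>
      intro K hK h
      have h1 : cost d m n (M + j0) ≤ cost d m n (K + 1) := ih (K + 1) (by omega) (by omega)
      have h2 : ¬ d ≤ 3 * 2 ^ (M + (K - M)) := Nat.find_min hex (by omega)
      rw [show M + (K - M) = K by omega] at h2
      exact le_trans h1 (cost_succ_le (by omega) (by omega) (by omega))
  intro K hK
  rcases le_or_gt (M + j0) K with h | h
  · exact up K h
  · exact down (M + j0 - K) K hK (by omega)

end HoroballAux


open HoroballAux in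
/-- The combinatorial horoball on a connected graph with at least two vertices
is connected, and any two vertices `(v, m)`, `(w, n)` are joined by a geodesic
consisting of at most two vertical segments (from `(v, m)` up to `(v, k)` and
from `(w, k)` down to `(w, n)`) together with a single horizontal segment of
length `h ≤ 3` at depth `k`. -/
theorem horoball_connected_and_geodesics {V : Type*} (Γ : SimpleGraph V)
    (hconn : Γ.Connected) (hV : Nontrivial V) :
    (horoball Γ).Connected ∧
    ∀ (v w : V) (m n : ℕ), ∃ k h : ℕ, m ≤ k ∧ n ≤ k ∧ h ≤ 3 ∧
      (horoball Γ).dist (v, k) (w, k) ≤ h ∧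
      (horoball Γ).dist (v, m) (w, n) = (k - m) + h + (k - n) := by
  constructor
  · rw [SimpleGraph.connected_iff]
    obtain ⟨a, b, -⟩ := hV.exists_pair_ne
    refine ⟨?_, ⟨(a, 0)⟩⟩
    rintro ⟨c, i⟩ ⟨e, j⟩
    obtain ⟨p, -⟩ := upper_walk hconn c e (le_max_left i j) (le_max_right i j)
    exact ⟨p⟩
  · intro v w m n
    set d := Γ.dist v w with hd
    obtain ⟨k, hkM, hk3, hkmin⟩ := exists_opt d m n
    have hm : m ≤ k := le_trans (le_max_left m n) hkM
    have hn : n ≤ k := le_trans (le_max_right m n) hkM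
    refine ⟨k, cdiv d k, hm, hn, cdiv_le (by omega), ?_, ?_⟩
    · obtain ⟨p, hp⟩ := horiz_walk hconn k d v w rfl
      exact hp ▸ SimpleGraph.dist_le p
    · obtain ⟨p, hp⟩ := upper_walk hconn v w hm hn
      have hub : (horoball Γ).dist (v, m) (w, n) ≤ (k - m) + cdiv d k + (k - n) :=
        hp ▸ SimpleGraph.dist_le p
      have hreach : (horoball Γ).Reachable (v, m) (w, n) := ⟨p⟩
      obtain ⟨q, hq⟩ := hreach.exists_walk_length_eq_dist
      obtain ⟨K, hK1, hK2, hK3⟩ := lower_bound hconn q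
      dsimp only at hK1 hK2 hK3
      rw [← hd] at hK3
      have hmin := hkmin K (by omega)
      unfold cost at hmin
      omega
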